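/- Let Π be a Hermitian block matrix and G_pq, G_pw, G_zq, G_zw, Γ as above with I - Γ G_zw invertible and Ḡ = G_pq + G_pw (I - Γ G_zw)^{-1} Γ G_zq. If [Ḡ; I]* Π [Ḡ; I] ≺ 0 (strictly), then there exists a scalar x > 0 such that with X = xI the sparse inequality [G_pq, G_pw; I, 0]* Π [G_pq, G_pw; I, 0] - [-G_zq*Γ^T; I - G_zw*Γ^T] X [-Γ G_zq, I - Γ G_zw] ≺ 0 holds. -/

import Mathlib

open Matrix
open scoped ComplexOrder

/-- Congruence by a matrix with invertible determinant preserves positive definiteness. -/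
lemma posDef_conj_of_isUnit_det {n : Type*} [Fintype n] [DecidableEq n]
    {A : Matrix n n ℂ} (hA : A.PosDef) {B : Matrix n n ℂ} (hB : IsUnit B.det) :
    (Bᴴ * A * B).PosDef := by
  refine Matrix.PosDef.of_dotProduct_mulVec_pos (isHermitian_conjTranspose_mul_mul B hA.1) fun v hv => ?_
  have hBv : B *ᵥ v ≠ 0 := by
    intro h
    apply hv
    have h2 := congrArg (fun w => B⁻¹ *ᵥ w) h
    simpa [Matrix.mulVec_mulVec, Matrix.nonsing_inv_mul B hB] using h2
  have hpos := hA.dotProduct_mulVec_pos hBv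
  have key : star v ⬝ᵥ ((Bᴴ * A * B) *ᵥ v) = star (B *ᵥ v) ⬝ᵥ (A *ᵥ (B *ᵥ v)) := by
    simp only [Matrix.mul_assoc, ← Matrix.mulVec_mulVec]
    rw [Matrix.dotProduct_mulVec, ← Matrix.star_mulVec]
  rwa [key]

/-- For any Hermitian matrix `H` there is `x > 0` with `x • 1 - H` positive definite. -/
lemma exists_smul_one_sub_posDef {n : Type*} [Fintype n] [DecidableEq n]
    {H : Matrix n n ℂ} (hH : H.IsHermitian) :
    ∃ x : ℝ, 0 < x ∧ (((x : ℂ) • (1 : Matrix n n ℂ)) - H).PosDef := by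
  set x : ℝ := 1 + ∑ i, |hH.eigenvalues i| with hxdef
  have hsum : (0:ℝ) ≤ ∑ i, |hH.eigenvalues i| := Finset.sum_nonneg fun i _ => abs_nonneg _
  have hx : 0 < x := by linarith
  refine ⟨x, hx, ?_⟩
  set U : Matrix n n ℂ := (hH.eigenvectorUnitary : Matrix n n ℂ) with hU
  have hU1 : U * star U = 1 := (Matrix.mem_unitaryGroup_iff).mp hH.eigenvectorUnitary.2
  have hU2 : star U * U = 1 := (Matrix.mem_unitaryGroup_iff').mp hH.eigenvectorUnitary.2
  have hdet : IsUnit (star U).det := by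
    apply IsUnit.of_mul_eq_one U.det
    rw [← Matrix.det_mul, hU2, Matrix.det_one]
  have hkey : ((x : ℂ) • (1 : Matrix n n ℂ)) - H
      = (star U)ᴴ * (Matrix.diagonal fun i => ((x - hH.eigenvalues i : ℝ) : ℂ)) * (star U) := by
    rw [← Matrix.star_eq_conjTranspose, star_star]
    conv_lhs => rw [hH.spectral_theorem, Unitary.conjStarAlgAut_apply]
    have h1 : ((x : ℂ) • (1 : Matrix n n ℂ)) = U * ((x : ℂ) • (1 : Matrix n n ℂ)) * star U := by
      rw [Matrix.mul_smul, Matrix.mul_one, Matrix.smul_mul, hU1]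
    rw [h1, ← hU, ← Matrix.sub_mul, ← Matrix.mul_sub]
    congr 1
    rw [Matrix.smul_one_eq_diagonal, Matrix.diagonal_sub]
    congr 1
    funext i
    simp [Function.comp, Complex.ofReal_sub]
  rw [hkey]
  apply posDef_conj_of_isUnit_det _ hdet
  apply Matrix.PosDef.diagonal
  intro i
  rw [Complex.zero_lt_real]
  have h1 : |hH.eigenvalues i| ≤ ∑ j, |hH.eigenvalues j| :=
    Finset.single_le_sum (f := fun j => |hH.eigenvalues j|) (fun j _ => abs_nonneg _)
      (Finset.mem_univ i)
  have h2 : hH.eigenvalues i ≤ |hH.eigenvalues i| := le_abs_self _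
  simp only [hxdef]
  linarith

/-- If `A ≻ 0` and `D` is Hermitian, then for large `x > 0` the block matrix
`[A B; Bᴴ (x•1 - D)]` is positive definite. -/
lemma exists_fromBlocks_posDef {n₁ n₂ : Type*} [Fintype n₁] [DecidableEq n₁]
    [Fintype n₂] [DecidableEq n₂]
    {A : Matrix n₁ n₁ ℂ} (B : Matrix n₁ n₂ ℂ) {D : Matrix n₂ n₂ ℂ}
    (hA : A.PosDef) (hD : D.IsHermitian) :
    ∃ x : ℝ, 0 < x ∧
      (fromBlocks A B Bᴴ (((x : ℂ) • (1 : Matrix n₂ n₂ ℂ)) - D)).PosDef := by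
  haveI : Invertible A := A.invertibleOfIsUnitDet (isUnit_iff_ne_zero.mpr hA.det_pos.ne')
  have hH : (D + Bᴴ * A⁻¹ * B).IsHermitian :=
    hD.add (Matrix.isHermitian_conjTranspose_mul_mul B hA.1.inv)
  obtain ⟨x, hx, hxH⟩ := exists_smul_one_sub_posDef hH
  refine ⟨x, hx, Matrix.PosDef.of_dotProduct_mulVec_pos ?_ fun v hv => ?_⟩
  · rw [Matrix.isHermitian_fromBlocks_iff]
    refine ⟨hA.1, rfl, Matrix.conjTranspose_conjTranspose B, ?_⟩
    refine Matrix.IsHermitian.sub ?_ hD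
    simp [Matrix.IsHermitian, Matrix.conjTranspose_smul, Complex.star_def]
  · rw [Matrix.dotProduct_mulVec, ← Sum.elim_comp_inl_inr v,
      Matrix.schur_complement_eq₁₁ B _ _ _ hA.1]
    have hsub : ((x : ℂ) • (1 : Matrix n₂ n₂ ℂ)) - D - Bᴴ * A⁻¹ * B
        = ((x : ℂ) • (1 : Matrix n₂ n₂ ℂ)) - (D + Bᴴ * A⁻¹ * B) := sub_sub _ _ _
    rw [hsub]
    by_cases hy : v ∘ Sum.inr = 0
    · have hxl : v ∘ Sum.inl ≠ 0 := by
        intro hxl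
        apply hv
        rw [← Sum.elim_comp_inl_inr v, hxl, hy]
        simp
      rw [hy]
      simp only [Matrix.mulVec_zero, add_zero, star_zero, Matrix.zero_vecMul,
        zero_dotProduct, dotProduct_zero]
      rw [← Matrix.dotProduct_mulVec]
      exact hA.dotProduct_mulVec_pos hxl
    · apply add_pos_of_nonneg_of_pos
      · rw [← Matrix.dotProduct_mulVec]
        exact hA.posSemidef.dotProduct_mulVec_nonneg _
      · rw [← Matrix.dotProduct_mulVec]
        exact hxH.dotProduct_mulVec_pos hy

/-- **Non-conservativeness of the sparse reformulation.**  If the lumped IQC LMI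
`[Ḡ; I]* Π [Ḡ; I] ≺ 0` holds strictly, where
`Ḡ = G_pq + G_pw (I - Γ G_zw)⁻¹ Γ G_zq`, then there is a scalar `x > 0` such
that, with `X = x I`, the sparse LMI
`[G_pq G_pw; I 0]* Π [G_pq G_pw; I 0] - [-G_zq*Γᵀ; I - G_zw*Γᵀ] X [-Γ G_zq, I - Γ G_zw] ≺ 0`
holds. -/
theorem lumped_implies_sparse {d m nz : ℕ}
    (Gpq : Matrix (Fin d) (Fin d) ℂ) (Gpw : Matrix (Fin d) (Fin m) ℂ)
    (Gzq : Matrix (Fin nz) (Fin d) ℂ) (Gzw : Matrix (Fin nz) (Fin m) ℂ)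
    (Gam : Matrix (Fin m) (Fin nz) ℂ)
    (P11 P12 P21 P22 : Matrix (Fin d) (Fin d) ℂ)
    (hP : (fromBlocks P11 P12 P21 P22).IsHermitian)
    (hinv : IsUnit (1 - Gam * Gzw).det)
    (hlumped :
      (-((fromRows (Gpq + Gpw * (1 - Gam * Gzw)⁻¹ * Gam * Gzq) (1 : Matrix (Fin d) (Fin d) ℂ))ᴴ *
          fromBlocks P11 P12 P21 P22 *
          fromRows (Gpq + Gpw * (1 - Gam * Gzw)⁻¹ * Gam * Gzq)
            (1 : Matrix (Fin d) (Fin d) ℂ))).PosDef) :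
    ∃ x : ℝ, 0 < x ∧
      (-(((fromBlocks Gpq Gpw (1 : Matrix (Fin d) (Fin d) ℂ) 0)ᴴ *
            fromBlocks P11 P12 P21 P22 *
            fromBlocks Gpq Gpw (1 : Matrix (Fin d) (Fin d) ℂ) 0 -
          (fromCols (-(Gam * Gzq)) (1 - Gam * Gzw))ᴴ *
            ((x : ℂ) • (1 : Matrix (Fin m) (Fin m) ℂ)) *
            fromCols (-(Gam * Gzq)) (1 - Gam * Gzw)))).PosDef := by
  -- abbreviations
  set Pi : Matrix (Fin d ⊕ Fin d) (Fin d ⊕ Fin d) ℂ := fromBlocks P11 P12 P21 P22 with hPi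
  set J : Matrix (Fin m) (Fin m) ℂ := 1 - Gam * Gzw with hJ
  set E : Matrix (Fin m) (Fin m) ℂ := J⁻¹ with hE
  set K : Matrix (Fin m) (Fin d) ℂ := Gam * Gzq with hK
  set Gbar : Matrix (Fin d) (Fin d) ℂ := Gpq + Gpw * J⁻¹ * Gam * Gzq with hGbar
  set F : Matrix (Fin d ⊕ Fin d) (Fin d) ℂ := fromRows Gbar 1 with hF
  set G₂ : Matrix (Fin d ⊕ Fin d) (Fin m) ℂ := fromRows (Gpw * E) 0 with hG₂
  set M : Matrix (Fin d ⊕ Fin d) (Fin d ⊕ Fin m) ℂ := fromBlocks Gpq Gpw 1 0 with hM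
  set C : Matrix (Fin m) (Fin d ⊕ Fin m) ℂ := fromCols (-K) J with hC
  set V : Matrix (Fin d ⊕ Fin m) (Fin d ⊕ Fin m) ℂ := fromBlocks 1 0 (E * K) E with hV
  have hJE : J * E = 1 := Matrix.mul_nonsing_inv _ hinv
  have hA₀ : (-(Fᴴ * Pi * F)).PosDef := hlumped
  have hD₀ : (G₂ᴴ * Pi * G₂).IsHermitian := Matrix.isHermitian_conjTranspose_mul_mul _ hP
  obtain ⟨x, hx, hN⟩ := exists_fromBlocks_posDef (-(Fᴴ * Pi * G₂)) hA₀ hD₀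
  refine ⟨x, hx, ?_⟩
  -- determinants
  have hVdet : IsUnit V.det := by
    rw [hV, Matrix.det_fromBlocks_zero₁₂, Matrix.det_one, one_mul, hE,
      Matrix.det_nonsing_inv, Ring.inverse_eq_inv']
    exact isUnit_iff_ne_zero.mpr (inv_ne_zero (isUnit_iff_ne_zero.mp hinv))
  have hVHdet : IsUnit (Vᴴ).det := by
    rw [Matrix.det_conjTranspose]
    exact hVdet.star
  have hWdet : IsUnit (V⁻¹).det := by
    rw [Matrix.det_nonsing_inv, Ring.inverse_eq_inv']
    exact isUnit_iff_ne_zero.mpr (inv_ne_zero (isUnit_iff_ne_zero.mp hVdet))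
  -- block computations
  have hMV : M * V = fromBlocks Gbar (Gpw * E) 1 0 := by
    rw [hM, hV, Matrix.fromBlocks_multiply, hGbar]
    simp [Matrix.mul_assoc, hE, hK]
  have hCV : C * V = fromCols 0 1 := by
    rw [hC, hV, Matrix.fromCols_mul_fromBlocks]
    simp [← Matrix.mul_assoc, hJE]
  have hMV' : M * V = fromCols F G₂ := by
    rw [hMV, hF, hG₂, Matrix.fromCols_fromRows_eq_fromBlocks]
  set Xs : Matrix (Fin m) (Fin m) ℂ := (x : ℂ) • (1 : Matrix (Fin m) (Fin m) ℂ) with hXs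
  have hBneg : (-(Fᴴ * Pi * G₂))ᴴ = -(G₂ᴴ * Pi * F) := by
    rw [Matrix.conjTranspose_neg, Matrix.conjTranspose_mul, Matrix.conjTranspose_mul,
      Matrix.conjTranspose_conjTranspose, hP.eq, ← Matrix.mul_assoc]
  rw [hBneg] at hN
  have expand : Vᴴ * (-(Mᴴ * Pi * M - Cᴴ * Xs * C)) * V
      = -((M * V)ᴴ * Pi * (M * V)) + (C * V)ᴴ * Xs * (C * V) := by
    simp only [Matrix.conjTranspose_mul, Matrix.mul_neg, Matrix.neg_mul, Matrix.mul_sub,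
      Matrix.sub_mul, Matrix.mul_assoc]
    abel
  have hT : Vᴴ * (-(Mᴴ * Pi * M - Cᴴ * Xs * C)) * V
      = fromBlocks (-(Fᴴ * Pi * F)) (-(Fᴴ * Pi * G₂)) (-(G₂ᴴ * Pi * F))
          (Xs - G₂ᴴ * Pi * G₂) := by
    rw [expand, hMV', hCV]
    simp only [Matrix.conjTranspose_fromCols_eq_fromRows_conjTranspose,
      Matrix.fromRows_mul, Matrix.mul_fromCols,
      Matrix.fromRows_fromCols_eq_fromBlocks, Matrix.fromRows_mul_fromCols,
      Matrix.conjTranspose_zero, Matrix.conjTranspose_one, Matrix.zero_mul,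
      Matrix.mul_zero, Matrix.one_mul, Matrix.mul_one, Matrix.fromBlocks_neg,
      Matrix.fromBlocks_add, Matrix.mul_assoc, add_zero, zero_add, neg_add_eq_sub,
      neg_zero]
    ext (i | i) (j | j) <;>
      simp [Matrix.fromCols, Matrix.fromBlocks, sub_eq_add_neg]
  have hfinal : -(Mᴴ * Pi * M - Cᴴ * Xs * C)
      = (V⁻¹)ᴴ * (fromBlocks (-(Fᴴ * Pi * F)) (-(Fᴴ * Pi * G₂)) (-(G₂ᴴ * Pi * F))
          (Xs - G₂ᴴ * Pi * G₂)) * V⁻¹ := by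
    rw [← hT, Matrix.conjTranspose_nonsing_inv]
    simp only [Matrix.mul_assoc]
    rw [Matrix.nonsing_inv_mul_cancel_left _ _ hVHdet, Matrix.mul_nonsing_inv _ hVdet,
      Matrix.mul_one]
  rw [hfinal]
  exact posDef_conj_of_isUnit_det hN hWdet
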